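/- Let k be a field of characteristic different from 2. A degree two rational map φ: P¹ → P¹ over k is uniquely determined by its (multiset of) fixed points together with its two critical points. That is, if φ and ψ are degree two rational maps with the same fixed points (with multiplicity) and the same critical points, then φ = ψ. -/

import Mathlib

/-- If two binary quadratic forms over an algebraically closed field have no common
nontrivial root and the second has nonzero leading coefficient, then their resultant
is nonzero. -/
lemma res_ne_zero_of_no_common_root {k : Type*} [Field k] [IsAlgClosed k]
    (a b c d e f : k)
    (hres : ∀ x y : k, ¬(x = 0 ∧ y = 0) →
      ¬(a * x ^ 2 + b * x * y + c * y ^ 2 = 0 ∧ d * x ^ 2 + e * x * y + f * y ^ 2 = 0))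
    (hd : d ≠ 0) :
    (a * f - c * d) ^ 2 - (a * e - b * d) * (b * f - c * e) ≠ 0 := by
  intro hρ
  obtain ⟨z, hz⟩ := IsAlgClosed.exists_root
    (Polynomial.C d * Polynomial.X ^ 2 + Polynomial.C e * Polynomial.X + Polynomial.C f)
    (by rw [Polynomial.degree_quadratic hd]; decide)
  simp only [Polynomial.IsRoot, Polynomial.eval_add, Polynomial.eval_mul,
    Polynomial.eval_pow, Polynomial.eval_C, Polynomial.eval_X] at hz
  -- hz : d * z ^ 2 + e * z + f = 0
  set w : k := -(e / d) - z with hw_def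
  have he : e = -(d * (z + w)) := by
    rw [hw_def]; field_simp; ring
  have hf : f = d * z * w := by
    rw [hw_def]; field_simp; linear_combination hz
  have key : d ^ 2 * ((a * z ^ 2 + b * z + c) * (a * w ^ 2 + b * w + c)) = 0 := by
    rw [← hρ, he, hf]; ring
  rcases mul_eq_zero.1 key with h | h
  · exact pow_ne_zero 2 hd h
  · rcases mul_eq_zero.1 h with h1 | h1
    · exact hres z 1 (by simp) ⟨by linear_combination h1, by linear_combination hz⟩
    · exact hres w 1 (by simp)
        ⟨by linear_combination h1, by rw [he, hf]; ring⟩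

/-- A degree two rational map `φ = [aX²+bXY+cY², dX²+eXY+fY²]` over a field of
characteristic ≠ 2 is uniquely determined by its fixed points (with multiplicity) and
its critical points.  Having the same fixed points with multiplicity means the fixed
point cubic forms `dX³+(e-a)X²Y+(f-b)XY²-cY³` are proportional, and having the same
critical points means the Wronskian quadratic forms
`(ae-bd)X²+2(af-cd)XY+(bf-ce)Y²` are proportional; the conclusion `φ = ψ` means the
coefficient tuples are proportional. -/
theorem unique_rational_map {k : Type*} [Field k] [IsAlgClosed k]
    (h2 : (2 : k) ≠ 0) (a b c d e f a' b' c' d' e' f' : k)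
    (hres : ∀ x y : k, ¬(x = 0 ∧ y = 0) →
      ¬(a * x ^ 2 + b * x * y + c * y ^ 2 = 0 ∧ d * x ^ 2 + e * x * y + f * y ^ 2 = 0))
    (hres' : ∀ x y : k, ¬(x = 0 ∧ y = 0) →
      ¬(a' * x ^ 2 + b' * x * y + c' * y ^ 2 = 0 ∧ d' * x ^ 2 + e' * x * y + f' * y ^ 2 = 0))
    (hfix : ∃ lam : k, lam ≠ 0 ∧ d' = lam * d ∧ e' - a' = lam * (e - a) ∧
      f' - b' = lam * (f - b) ∧ c' = lam * c)
    (hcrit : ∃ mu : k, mu ≠ 0 ∧ a' * e' - b' * d' = mu * (a * e - b * d) ∧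
      a' * f' - c' * d' = mu * (a * f - c * d) ∧ b' * f' - c' * e' = mu * (b * f - c * e)) :
    ∃ nu : k, nu ≠ 0 ∧ a' = nu * a ∧ b' = nu * b ∧ c' = nu * c ∧
      d' = nu * d ∧ e' = nu * e ∧ f' = nu * f := by
  obtain ⟨lam, hl0, hd', he', hf', hc'⟩ := hfix
  obtain ⟨mu, hm0, g1, g2, g3⟩ := hcrit
  -- the resultant of the two quadratic forms of φ is nonzero
  have hρ : (a * f - c * d) ^ 2 - (a * e - b * d) * (b * f - c * e) ≠ 0 := by
    by_cases hd : d = 0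
    · by_cases ha : a = 0
      · exact absurd ⟨by rw [ha]; ring, by rw [hd]; ring⟩ (hres 1 0 (by simp))
      · have h := res_ne_zero_of_no_common_root d e f a b c
          (fun x y hxy h => hres x y hxy ⟨h.2, h.1⟩) ha
        intro h0; exact h (by linear_combination h0)
    · exact res_ne_zero_of_no_common_root a b c d e f hres hd
  set s : k := a' - lam * a with hs_def
  set t : k := b' - lam * b with ht_def
  have ha' : a' = lam * a + s := by rw [hs_def]; ring
  have hb' : b' = lam * b + t := by rw [ht_def]; ring
  have he2 : e' = lam * e + s := by rw [hs_def]; linear_combination he'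
  have hf2 : f' = lam * f + t := by rw [ht_def]; linear_combination hf'
  have e1 : (lam * a + s) * (lam * e + s) - (lam * b + t) * (lam * d)
      = mu * (a * e - b * d) := by
    linear_combination g1 - (lam * e + s) * ha' - a' * he2 + (lam * d) * hb' + b' * hd'
  have e2 : (lam * a + s) * (lam * f + t) - (lam * c) * (lam * d)
      = mu * (a * f - c * d) := by
    linear_combination g2 - (lam * f + t) * ha' - a' * hf2 + lam * d * hc' + c' * hd'
  have e3 : (lam * b + t) * (lam * f + t) - (lam * c) * (lam * e + s)
      = mu * (b * f - c * e) := by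
    linear_combination g3 - (lam * f + t) * hb' - b' * hf2 + (lam * e + s) * hc' + c' * he2
  -- Nullstellensatz certificates forcing s = 0 and t = 0
  have hs0 : s = 0 := by
    have cert : mu * (((a * f - c * d) ^ 2 - (a * e - b * d) * (b * f - c * e)) * s) = 0 := by
      linear_combination
        ((a * f - c * d) * t + lam * ((a * e - b * d) * c + (a * f - c * d) * f)) * e1
        - ((a * f - c * d) * s + (a * e - b * d) * t
            + lam * ((a * e - b * d) * b + (a * f - c * d) * e)) * e2
        + ((a * e - b * d) * s + lam * ((a * e - b * d) * a + (a * f - c * d) * d)) * e3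
    rcases mul_eq_zero.1 cert with h | h
    · exact absurd h hm0
    · exact (mul_eq_zero.1 h).resolve_left hρ
  have ht0 : t = 0 := by
    have cert : mu * (((a * f - c * d) ^ 2 - (a * e - b * d) * (b * f - c * e)) * t) = 0 := by
      linear_combination
        ((b * f - c * e) * t + lam * ((a * f - c * d) * c + (b * f - c * e) * f)) * e1
        - ((b * f - c * e) * s + (a * f - c * d) * t
            + lam * ((a * f - c * d) * b + (b * f - c * e) * e)) * e2
        + ((a * f - c * d) * s + lam * ((a * f - c * d) * a + (b * f - c * e) * d)) * e3
    rcases mul_eq_zero.1 cert with h | h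
    · exact absurd h hm0
    · exact (mul_eq_zero.1 h).resolve_left hρ
  exact ⟨lam, hl0, by rw [ha', hs0]; ring, by rw [hb', ht0]; ring, hc', hd',
    by rw [he2, hs0]; ring, by rw [hf2, ht0]; ring⟩
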